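/- If A is a real (or complex) square matrix all of whose eigenvalues are real and such that e^A is diagonalizable, then A is diagonalizable. -/

import Mathlib

open Matrix Polynomial

lemma exp_nilpotent_eq_sum {n k : ℕ} (N : Matrix (Fin n) (Fin n) ℂ) (hN : N ^ k = 0) :
    NormedSpace.exp N = ∑ j ∈ Finset.range k, ((j.factorial : ℂ))⁻¹ • N ^ j := by
  rw [NormedSpace.exp_eq_tsum (𝕂 := ℂ)]
  refine tsum_eq_sum fun j hj => ?_
  rw [pow_eq_zero_of_le (le_of_not_gt (fun h => hj (Finset.mem_range.mpr h))) hN, smul_zero]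

lemma semisimple_of_conj_diag {n : ℕ} (T D : Matrix (Fin n) (Fin n) ℂ) (hT : IsUnit T)
    (hD : D.IsDiag) : Module.End.IsSemisimple (Matrix.toLin' (T * D * T⁻¹)) := by
  classical
  have hdet : IsUnit T.det := (Matrix.isUnit_iff_isUnit_det T).mp hT
  have hDss : Module.End.IsSemisimple (Matrix.toLin' D) := by
    set d : Fin n → ℂ := fun i => D i i with hd
    have hDd : Matrix.diagonal d = D := hD.diagonal_diag
    set s : Finset ℂ := Finset.image d Finset.univ with hs
    set p : ℂ[X] := ∏ μ ∈ s, (X - C μ) with hp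
    have hsq : Squarefree p := by
      refine (Polynomial.separable_prod_X_sub_C_iff'.mpr ?_).squarefree
      exact fun x _ y _ h => h
    have haevald : Polynomial.aeval D p = 0 := by
      rw [← hDd]
      have h1 : Matrix.diagonal d = Matrix.diagonalAlgHom ℂ d := rfl
      rw [h1, Polynomial.aeval_algHom_apply]
      have h2 : Polynomial.aeval d p = 0 := by
        funext i
        have h3 : (Polynomial.aeval d p) i = Polynomial.aeval (d i) p := by
          exact (Polynomial.aeval_algHom_apply (Pi.evalAlgHom ℂ (fun _ => ℂ) i) d p).symm
        have h4 : d i ∈ s := Finset.mem_image_of_mem d (Finset.mem_univ i)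
        rw [h3, hp]
        rw [map_prod]
        refine Finset.prod_eq_zero h4 ?_
        simp
      rw [h2, map_zero]
    refine Module.End.isSemisimple_of_squarefree_aeval_eq_zero hsq ?_
    have h5 : Matrix.toLin' D = Matrix.toLinAlgEquiv'.toAlgHom D := rfl
    rw [h5, Polynomial.aeval_algHom_apply, haevald, map_zero]
  let e : (Fin n → ℂ) ≃ₗ[ℂ] (Fin n → ℂ) :=
    LinearEquiv.ofLinear (Matrix.toLin' T) (Matrix.toLin' T⁻¹)
      (by rw [← Matrix.toLin'_mul, Matrix.mul_nonsing_inv _ hdet, Matrix.toLin'_one])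
      (by rw [← Matrix.toLin'_mul, Matrix.nonsing_inv_mul _ hdet, Matrix.toLin'_one])
  refine (LinearEquiv.isSemisimple_iff (Matrix.toLin' D) _ e ?_).mp hDss
  show Matrix.toLin' T ∘ₗ Matrix.toLin' D = Matrix.toLin' (T * D * T⁻¹) ∘ₗ Matrix.toLin' T
  rw [← Matrix.toLin'_mul, ← Matrix.toLin'_mul, Matrix.nonsing_inv_mul_cancel_right _ _ hdet]


lemma exists_diag_of_semisimple {n : ℕ} (S : Matrix (Fin n) (Fin n) ℂ)
    (hs : Module.End.IsSemisimple (Matrix.toLin' S)) :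
    ∃ T D : Matrix (Fin n) (Fin n) ℂ, IsUnit T ∧ D.IsDiag ∧ S = T * D * T⁻¹ := by
  classical
  set f := Matrix.toLin' S with hf
  have htop : ⨆ μ : ℂ, Module.End.eigenspace f μ = ⊤ := by
    have h := Module.End.iSup_maxGenEigenspace_eq_top f
    have h2 : ∀ μ : ℂ, Module.End.maxGenEigenspace f μ = Module.End.eigenspace f μ :=
      fun μ => hs.isFinitelySemisimple.maxGenEigenspace_eq_eigenspace μ
    simp_rw [h2] at h
    exact h
  set t : Set (Fin n → ℂ) := ⋃ μ : ℂ, (Module.End.eigenspace f μ : Set (Fin n → ℂ)) with ht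
  have hspan : Submodule.span ℂ t = ⊤ := by
    rw [ht, Submodule.span_iUnion]
    simp_rw [Submodule.span_eq]
    exact htop
  obtain ⟨b, hbt, hbspan, hbind⟩ := exists_linearIndependent ℂ t
  let bas : Module.Basis b ℂ (Fin n → ℂ) := Module.Basis.mk hbind (by rw [Subtype.range_coe, hbspan, hspan])
  haveI : Fintype b := FiniteDimensional.fintypeBasisIndex bas
  have hcard : Fintype.card b = n := by
    rw [← Module.finrank_eq_card_basis bas, Module.finrank_fin_fun]
  let e : b ≃ Fin n := Fintype.equivFinOfCardEq hcard
  let b' : Module.Basis (Fin n) ℂ (Fin n → ℂ) := bas.reindex e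
  have hx : ∀ x : b, ∃ μ : ℂ, f (x : Fin n → ℂ) = μ • (x : Fin n → ℂ) := by
    rintro ⟨x, hxb⟩
    obtain ⟨μ, hμ⟩ := Set.mem_iUnion.mp (hbt hxb)
    exact ⟨μ, Module.End.mem_eigenspace_iff.mp hμ⟩
  choose μf hμf using hx
  set d : Fin n → ℂ := fun i => μf (e.symm i) with hdd
  have hb' : ∀ i, f (b' i) = d i • b' i := by
    intro i
    have : b' i = (e.symm i : Fin n → ℂ) := by
      rw [Module.Basis.reindex_apply, Module.Basis.mk_apply]
    rw [this, hdd]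
    exact hμf (e.symm i)
  set T : Matrix (Fin n) (Fin n) ℂ := Matrix.of (fun i j => b' j i) with hTT
  have hTunit : IsUnit T := by
    have hTb : T = (Pi.basisFun ℂ (Fin n)).toMatrix ⇑b' := by
      ext i j
      simp [hTT, Module.Basis.toMatrix_apply]
    rw [hTb]
    have := Module.Basis.invertibleToMatrix (Pi.basisFun ℂ (Fin n)) b'
    exact isUnit_of_invertible _
  refine ⟨T, Matrix.diagonal d, hTunit, Matrix.isDiag_diagonal d, ?_⟩
  have hST : S * T = T * Matrix.diagonal d := by
    ext i j
    have h1 : S.mulVec (b' j) = d j • (b' j) := by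
      have := hb' j
      rwa [hf, Matrix.toLin'_apply] at this
    have h2 : (S * T) i j = (S.mulVec (b' j)) i := by
      simp [Matrix.mul_apply, Matrix.mulVec, dotProduct, hTT]
    rw [h2, h1, Matrix.mul_diagonal]
    simp [hTT, mul_comm]
  have hdet : IsUnit T.det := (Matrix.isUnit_iff_isUnit_det T).mp hTunit
  calc S = S * T * T⁻¹ := by rw [Matrix.mul_nonsing_inv_cancel_right _ _ hdet]
    _ = T * Matrix.diagonal d * T⁻¹ := by rw [hST]

theorem diagonalizable_of_exp_diagonalizable {n : ℕ}
    (A : Matrix (Fin n) (Fin n) ℂ)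
    (hreal : ∀ z ∈ spectrum ℂ A, z.im = 0)
    (hdiag : ∃ T D : Matrix (Fin n) (Fin n) ℂ,
      IsUnit T ∧ D.IsDiag ∧ NormedSpace.exp A = T * D * T⁻¹) :
    ∃ T D : Matrix (Fin n) (Fin n) ℂ, IsUnit T ∧ D.IsDiag ∧ A = T * D * T⁻¹ := by
  classical
  set φ : Matrix (Fin n) (Fin n) ℂ ≃ₐ[ℂ] ((Fin n → ℂ) →ₗ[ℂ] (Fin n → ℂ)) :=
    Matrix.toLinAlgEquiv' with hφdef
  have heq : ∀ X : Matrix (Fin n) (Fin n) ℂ, Matrix.toLin' X = φ X := fun X => rfl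
  obtain ⟨T₀, D₀, hT₀, hD₀, hE⟩ := hdiag
  obtain ⟨n₀, hn₀mem, s₀, hs₀mem, hn₀nil, hs₀ss, hfeq⟩ :=
    Module.End.exists_isNilpotent_isSemisimple (f := Matrix.toLin' A)
  set ψ : ((Fin n → ℂ) →ₗ[ℂ] (Fin n → ℂ)) ≃ₐ[ℂ] Matrix (Fin n) (Fin n) ℂ :=
    Matrix.toLinAlgEquiv'.symm with hψ
  set N : Matrix (Fin n) (Fin n) ℂ := ψ n₀ with hN
  set S : Matrix (Fin n) (Fin n) ℂ := ψ s₀ with hS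
  have hφN : Matrix.toLin' N = n₀ := by
    rw [hN]; exact Matrix.toLinAlgEquiv'.apply_symm_apply n₀
  have hφS : Matrix.toLin' S = s₀ := by
    rw [hS]; exact Matrix.toLinAlgEquiv'.apply_symm_apply s₀
  have hAeq : A = N + S := by
    have h1 : ψ (Matrix.toLin' A) = A := Matrix.toLinAlgEquiv'.symm_apply_apply A
    rw [← h1, hfeq, map_add]
  -- commutation
  have hc1 : Commute (Matrix.toLin' A) s₀ := Algebra.commute_of_mem_adjoin_self hs₀mem
  have hc2 : Commute s₀ n₀ :=
    Algebra.commute_of_mem_adjoin_singleton_of_commute hn₀mem hc1.symm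
  have hSN : Commute S N := by
    show S * N = N * S
    rw [hS, hN, ← _root_.map_mul, ← _root_.map_mul, hc2.eq]
  have hNnil : IsNilpotent N := by
    obtain ⟨k, hk⟩ := hn₀nil
    exact ⟨k, by rw [hN, ← map_pow, hk, map_zero]⟩
  -- semisimplicity of exp A
  have hEss : Module.End.IsSemisimple (Matrix.toLin' (NormedSpace.exp A)) := by
    rw [hE]; exact semisimple_of_conj_diag _ _ hT₀ hD₀
  -- S is semisimple; diagonalize it
  obtain ⟨T₁, D₁, hT₁, hD₁, hSdiag⟩ := exists_diag_of_semisimple S (by rw [hφS]; exact hs₀ss)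
  -- exp S is semisimple
  have hexpSss : Module.End.IsSemisimple (Matrix.toLin' (NormedSpace.exp S)) := by
    rw [hSdiag, Matrix.exp_conj T₁ D₁ hT₁]
    have hdiagexp : (NormedSpace.exp D₁).IsDiag := by
      rw [← hD₁.diagonal_diag, Matrix.exp_diagonal]
      exact Matrix.isDiag_diagonal _
    exact semisimple_of_conj_diag _ _ hT₁ hdiagexp
  -- nilpotent computations
  obtain ⟨k, hk⟩ := hNnil
  have hk2 : N ^ (k + 2) = 0 := pow_eq_zero_of_le (by omega) hk
  have hexpN : NormedSpace.exp N =
      ∑ j ∈ Finset.range (k + 2), ((j.factorial : ℂ))⁻¹ • N ^ j :=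
    exp_nilpotent_eq_sum N hk2
  set B : Matrix (Fin n) (Fin n) ℂ :=
    ∑ j ∈ Finset.range (k + 1), (((j + 1).factorial : ℂ))⁻¹ • N ^ j with hB
  set C : Matrix (Fin n) (Fin n) ℂ :=
    ∑ j ∈ Finset.range k, (((j + 2).factorial : ℂ))⁻¹ • N ^ j with hC
  have h1 : NormedSpace.exp N - 1 = N * B := by
    rw [hexpN, Finset.sum_range_succ' (fun j => ((j.factorial : ℂ))⁻¹ • N ^ j) (k + 1)]
    simp only [Nat.factorial_zero, Nat.cast_one, inv_one, pow_zero, one_smul]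
    rw [add_sub_cancel_right, hB, Finset.mul_sum]
    refine Finset.sum_congr rfl fun j _ => ?_
    rw [pow_succ', mul_smul_comm]
  have h2 : B = 1 + N * C := by
    rw [hB, Finset.sum_range_succ' (fun j => (((j + 1).factorial : ℂ))⁻¹ • N ^ j) k]
    simp only [Nat.factorial_one, Nat.cast_one, inv_one, pow_zero, one_smul, zero_add]
    rw [add_comm, hC, Finset.mul_sum]
    congr 1
    refine Finset.sum_congr rfl fun j _ => ?_
    rw [pow_succ', mul_smul_comm]
  have hNB : Commute N B := by
    refine Commute.sum_right _ _ _ fun j _ => ?_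
    exact ((Commute.refl N).pow_right j).smul_right _
  have hNC : Commute N C := by
    refine Commute.sum_right _ _ _ fun j _ => ?_
    exact ((Commute.refl N).pow_right j).smul_right _
  -- exp A = exp S * exp N
  have hexpSN : Commute (NormedSpace.exp S) (NormedSpace.exp N) := hSN.exp
  have hEeq : NormedSpace.exp A = NormedSpace.exp S * NormedSpace.exp N := by
    rw [hAeq, Matrix.exp_add_of_commute N S hSN.symm, hexpSN.eq]
  -- E - exp S is nilpotent and semisimple, hence zero
  have hMnilmat : IsNilpotent (NormedSpace.exp A - NormedSpace.exp S) := by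
    have hM : NormedSpace.exp A - NormedSpace.exp S =
        NormedSpace.exp S * (NormedSpace.exp N - 1) := by
      rw [hEeq, mul_sub, mul_one]
    rw [hM]
    have hnil1 : IsNilpotent (NormedSpace.exp N - 1) := by
      rw [h1]; exact hNB.isNilpotent_mul_right ⟨k, hk⟩
    exact (hexpSN.sub_right (Commute.one_right _)).isNilpotent_mul_left hnil1
  have hcommE : Commute (NormedSpace.exp S) (NormedSpace.exp A) := by
    rw [hEeq]; exact (Commute.refl _).mul_right hexpSN
  have hMss : Module.End.IsSemisimple
      (Matrix.toLin' (NormedSpace.exp A) - Matrix.toLin' (NormedSpace.exp S)) := by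
    refine Module.End.IsSemisimple.sub_of_commute ?_ hEss hexpSss
    show Matrix.toLin' (NormedSpace.exp A) * Matrix.toLin' (NormedSpace.exp S) =
      Matrix.toLin' (NormedSpace.exp S) * Matrix.toLin' (NormedSpace.exp A)
    rw [heq, heq, ← _root_.map_mul, ← _root_.map_mul, hcommE.eq]
  have hMnil : IsNilpotent
      (Matrix.toLin' (NormedSpace.exp A) - Matrix.toLin' (NormedSpace.exp S)) := by
    obtain ⟨m, hm⟩ := hMnilmat
    exact ⟨m, by rw [heq, heq, ← map_sub, ← map_pow, hm, map_zero]⟩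
  have hzero := Module.End.eq_zero_of_isNilpotent_isSemisimple hMnil hMss
  have hEexpS : NormedSpace.exp A = NormedSpace.exp S := by
    have h3 : φ (NormedSpace.exp A - NormedSpace.exp S) = 0 := by
      rw [map_sub, ← heq, ← heq, hzero]
    have h4 := φ.injective (h3.trans (map_zero φ).symm)
    exact sub_eq_zero.mp h4
  have hexpN1 : NormedSpace.exp N = 1 := by
    refine (Matrix.isUnit_exp S).mul_left_cancel ?_
    rw [← hEeq, hEexpS, mul_one]
  have hNB0 : N * B = 0 := by rw [← h1, hexpN1, sub_self]
  have hBunit : IsUnit B := by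
    rw [h2]
    exact (hNC.isNilpotent_mul_right ⟨k + 2, hk2⟩).isUnit_one_add
  have hN0 : N = 0 := by
    obtain ⟨u, hu⟩ := hBunit
    exact (Units.mul_left_eq_zero u).mp (by rw [hu]; exact hNB0)
  have hAS : A = S := by rw [hAeq, hN0, zero_add]
  exact ⟨T₁, D₁, hT₁, hD₁, by rw [hAS, hSdiag]⟩
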